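/- Let τ ∈ ℝ, γ > 0, and n ∈ ℕ, and set ω = aₙ := (n+1)/(n+2). Let y, f, g : [τ, ∞) → ℝ be nonnegative functions with f, g locally integrable, and assume y is differentiable on [τ, ∞), y(t) ≥ 1 for all t ≥ τ, and y′(t) + γ·y(t) ≤ f(t)·y(t)^{ω} + g(t) for every t ∈ [τ, ∞). Assume sup_{t ≥ τ} ∫_t^{t+1} f(s) ds ≤ A₁ and sup_{t ≥ τ} ∫_t^{t+1} g(s) ds ≤ A₂ for positive constants A₁, A₂. Then for every t ≥ τ: y(t) ≤ 4·(4^{αₙ}·2^{βₙ}·y(τ)·e^{−θₙ·γ·(t−τ)} + Q(γ/2, A₁, A₂)^{βₙ}), where α₀ = 0 and αₙ = (n+2)·∑_{j=2}^{n+1} 1/j for n ≥ 1, βₙ = (n+2)/2, θₙ = (n+2)/2^{n+1}, and Q(γ, A₁, A₂) = ((e^{γ/2}/(1 − e^{−γ/2}))·A₁)² + (2·e^{γ}/(1 − e^{−γ}))·A₂. -/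

import Mathlib

open MeasureTheory Set Real

variable {τ : ℝ} {F : ℝ → ℝ}

lemma GP_intInt (hloc : LocallyIntegrableOn F (Ici τ) volume) {a b : ℝ} (ha : τ ≤ a) (hab : a ≤ b) :
    IntervalIntegrable F volume a b := by
  have : IntegrableOn F (Icc a b) volume :=
    hloc.integrableOn_compact_subset (Icc_subset_Ici_self.trans (Ici_subset_Ici.2 ha)) isCompact_Icc
  exact (this.mono_set (by rw [uIcc_of_le hab])).intervalIntegrable

lemma GP_intInt_mul (hloc : LocallyIntegrableOn F (Ici τ) volume) {G : ℝ → ℝ} {a b : ℝ}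
    (ha : τ ≤ a) (hab : a ≤ b) (hG : ContinuousOn G (Icc a b)) :
    IntervalIntegrable (fun s => G s * F s) volume a b :=
  (GP_intInt hloc ha hab).continuousOn_mul (by rwa [uIcc_of_le hab])

lemma GP_window {A : ℝ} (hF : ∀ t ∈ Ici τ, 0 ≤ F t)
    (hloc : LocallyIntegrableOn F (Ici τ) volume)
    (hW : ∀ r ∈ Ici τ, ∫ s in r..(r + 1), F s ≤ A)
    {a b : ℝ} (ha : τ ≤ a) (hab : a ≤ b) (hb : b ≤ a + 1) :
    ∫ s in a..b, F s ≤ A := by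
  have h1 : ∫ s in a..(a+1), F s = (∫ s in a..b, F s) + ∫ s in b..(a+1), F s :=
    (intervalIntegral.integral_add_adjacent_intervals
      (GP_intInt hloc ha hab) (GP_intInt hloc (ha.trans hab) hb)).symm
  have h2 : 0 ≤ ∫ s in b..(a+1), F s := by
    apply intervalIntegral.integral_nonneg hb
    intro u hu
    exact hF u (le_trans (ha.trans hab) hu.1)
  have := hW a ha
  linarith

/-- Key kernel estimate : `∫_τ^t e^{-σ(t-s)} F(s) ds ≤ (1-e^{-σ})⁻¹ A`. -/
lemma GP_kernel {A σ : ℝ} (hσ : 0 < σ) (hA : 0 ≤ A)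
    (hF : ∀ t ∈ Ici τ, 0 ≤ F t) (hloc : LocallyIntegrableOn F (Ici τ) volume)
    (hW : ∀ r ∈ Ici τ, ∫ s in r..(r + 1), F s ≤ A)
    {t : ℝ} (ht : τ ≤ t) :
    ∫ s in τ..t, exp (-σ * (t - s)) * F s ≤ (1 - exp (-σ))⁻¹ * A := by
  have hr0 : (0:ℝ) ≤ exp (-σ) := (exp_pos _).le
  have hr1 : exp (-σ) < 1 := exp_lt_one_iff.2 (by linarith)
  -- main induction
  have main : ∀ N : ℕ, ∀ t : ℝ, τ ≤ t → t ≤ τ + N →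
      ∫ s in τ..t, exp (-σ * (t - s)) * F s ≤ (∑ k ∈ Finset.range N, exp (-σ) ^ k) * A := by
    intro N
    induction N with
    | zero =>
      intro t ht1 ht2
      have : t = τ := le_antisymm (by simpa using ht2) ht1
      subst this
      simp
    | succ N ih =>
      intro t ht1 ht2
      have hker : ∀ u : ℝ, ∀ s : ℝ, (0:ℝ) ≤ exp (-σ * (u - s)) := fun u s => (exp_pos _).le
      have hgeom : (0:ℝ) ≤ ∑ k ∈ Finset.range N, exp (-σ) ^ k :=
        Finset.sum_nonneg fun k _ => pow_nonneg hr0 k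
      rcases le_or_gt t (τ + 1) with hc | hc
      · -- single window
        have h1 : ∫ s in τ..t, exp (-σ * (t - s)) * F s ≤ ∫ s in τ..t, F s := by
          apply intervalIntegral.integral_mono_on ht1
            (GP_intInt_mul hloc le_rfl ht1 (by fun_prop)) (GP_intInt hloc le_rfl ht1)
          intro x hx
          have hFx : 0 ≤ F x := hF x hx.1
          nlinarith [exp_le_one_iff.2 (by nlinarith [hx.2] : -σ * (t - x) ≤ 0), hFx,
            (exp_pos (-σ * (t - x))).le]
        have h2 : ∫ s in τ..t, F s ≤ A := GP_window hF hloc hW le_rfl ht1 hc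
        have h3 : (1:ℝ) ≤ ∑ k ∈ Finset.range (N+1), exp (-σ) ^ k := by
          have hsub : (∑ k ∈ Finset.range 1, exp (-σ) ^ k)
              ≤ ∑ k ∈ Finset.range (N+1), exp (-σ) ^ k :=
            Finset.sum_le_sum_of_subset_of_nonneg
              (Finset.range_subset_range.2 (Nat.le_add_left 1 N)) (fun k _ _ => pow_nonneg hr0 k)
          simpa using hsub
        nlinarith
      · -- split at t - 1
        have ht1' : τ ≤ t - 1 := by linarith
        have hsplit : ∫ s in τ..t, exp (-σ * (t - s)) * F s
            = (∫ s in τ..(t-1), exp (-σ * (t - s)) * F s)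
              + ∫ s in (t-1)..t, exp (-σ * (t - s)) * F s :=
          (intervalIntegral.integral_add_adjacent_intervals
            (GP_intInt_mul hloc le_rfl ht1' (by fun_prop))
            (GP_intInt_mul hloc ht1' (by linarith) (by fun_prop))).symm
        have heq : ∫ s in τ..(t-1), exp (-σ * (t - s)) * F s
            = exp (-σ) * ∫ s in τ..(t-1), exp (-σ * ((t-1) - s)) * F s := by
          rw [← intervalIntegral.integral_const_mul]
          apply intervalIntegral.integral_congr
          intro x _
          simp only
          rw [← mul_assoc, ← exp_add]
          ring_nf
        have hih : ∫ s in τ..(t-1), exp (-σ * ((t-1) - s)) * F s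
            ≤ (∑ k ∈ Finset.range N, exp (-σ) ^ k) * A := by
          apply ih (t-1) ht1'
          push_cast at ht2
          linarith
        have hlast : ∫ s in (t-1)..t, exp (-σ * (t - s)) * F s ≤ A := by
          have hmono : ∫ s in (t-1)..t, exp (-σ * (t - s)) * F s ≤ ∫ s in (t-1)..t, F s := by
            apply intervalIntegral.integral_mono_on (by linarith)
              (GP_intInt_mul hloc ht1' (by linarith) (by fun_prop))
              (GP_intInt hloc ht1' (by linarith))
            intro x hx
            have hFx : 0 ≤ F x := hF x (ht1'.trans hx.1)
            nlinarith [exp_le_one_iff.2 (by nlinarith [hx.2] : -σ * (t - x) ≤ 0),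
              (exp_pos (-σ * (t - x))).le]
          have := GP_window hF hloc hW ht1' (show t - 1 ≤ t by linarith)
            (show t ≤ t - 1 + 1 by linarith)
          linarith
        have hgs : (∑ k ∈ Finset.range (N+1), exp (-σ) ^ k)
            = exp (-σ) * (∑ k ∈ Finset.range N, exp (-σ) ^ k) + 1 := geom_sum_succ
        rw [hsplit, heq, hgs]
        nlinarith [mul_le_mul_of_nonneg_left hih hr0]
  obtain ⟨N, hN⟩ := exists_nat_ge (t - τ)
  have := main N t ht (by linarith)
  have hsum : (∑ k ∈ Finset.range N, exp (-σ) ^ k) ≤ (1 - exp (-σ))⁻¹ := by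
    have := tsum_geometric_of_lt_one hr0 hr1
    calc (∑ k ∈ Finset.range N, exp (-σ) ^ k) ≤ ∑' k : ℕ, exp (-σ) ^ k :=
          Summable.sum_le_tsum _ (fun k _ => pow_nonneg hr0 k) (summable_geometric_of_lt_one hr0 hr1)
      _ = (1 - exp (-σ))⁻¹ := this
  nlinarith

set_option maxHeartbeats 1000000 in
/-- Base case: square-root nonlinearity. -/
lemma GP_base (τ γ : ℝ) (hγ : 0 < γ) (y y' f g : ℝ → ℝ) (A₁ A₂ : ℝ)
    (hA₁ : 0 < A₁) (hA₂ : 0 < A₂)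
    (hy1 : ∀ t ∈ Ici τ, 1 ≤ y t)
    (hf : ∀ t ∈ Ici τ, 0 ≤ f t) (hg : ∀ t ∈ Ici τ, 0 ≤ g t)
    (hfloc : LocallyIntegrableOn f (Ici τ))
    (hgloc : LocallyIntegrableOn g (Ici τ))
    (hderiv : ∀ t ∈ Ici τ, HasDerivAt y (y' t) t)
    (hineq : ∀ t ∈ Ici τ, y' t + γ * y t ≤ f t * y t ^ ((1:ℝ)/2) + g t)
    (hf1 : ∀ r ∈ Ici τ, ∫ s in r..(r + 1), f s ≤ A₁)
    (hg1 : ∀ r ∈ Ici τ, ∫ s in r..(r + 1), g s ≤ A₂) :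
    ∀ t ∈ Ici τ, y t ≤ 2 * y τ * exp (-(γ * (t - τ)))
      + (((1 - exp (-(γ/2)))⁻¹ * A₁)^2 + 2 * (1 - exp (-γ))⁻¹ * A₂) := by
  intro t ht
  rw [mem_Ici] at ht
  have hy0 : ∀ s ∈ Ici τ, (0:ℝ) ≤ y s := fun s hs => zero_le_one.trans (hy1 s hs)
  have hycont : ContinuousOn y (Icc τ t) := fun s hs =>
    (hderiv s hs.1).continuousAt.continuousWithinAt
  set h : ℝ → ℝ := fun s => y s * exp (γ * (s - τ)) with hh
  have hhcont : ContinuousOn h (Icc τ t) :=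
    hycont.mul (Continuous.continuousOn (by fun_prop))
  obtain ⟨c, hc, hmax⟩ := isCompact_Icc.exists_isMaxOn (nonempty_Icc.2 ht) hhcont
  set m := h c with hm
  have hm_ge : ∀ s ∈ Icc τ t, h s ≤ m := fun s hs => hmax hs
  have hhτ : h τ = y τ := by simp [hh]
  have hm1 : 1 ≤ m := by
    have h1 := hy1 τ (mem_Ici.2 le_rfl)
    have h2 := hm_ge τ (left_mem_Icc.2 ht)
    rw [hhτ] at h2
    linarith
  have hmpos : 0 < m := lt_of_lt_of_le one_pos hm1
  -- the integral inequality up to the max point c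
  set φ : ℝ → ℝ := fun s =>
    exp (γ * (s - τ)) * y s ^ ((1:ℝ)/2) * f s + exp (γ * (s - τ)) * g s with hφ
  have hExpCont : Continuous (fun s : ℝ => exp (γ * (s - τ))) := by fun_prop
  have hyhalfcont : ContinuousOn (fun s => exp (γ * (s - τ)) * y s ^ ((1:ℝ)/2)) (Icc τ c) := by
    apply (hExpCont.continuousOn).mul
    apply ContinuousOn.rpow_const
    · exact hycont.mono (Icc_subset_Icc le_rfl hc.2)
    · intro x hx
      exact Or.inr (by norm_num)
  have hint1 : IntervalIntegrable (fun s => exp (γ * (s - τ)) * y s ^ ((1:ℝ)/2) * f s)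
      volume τ c := by
    have := GP_intInt_mul hfloc (le_refl τ) hc.1 hyhalfcont
    simpa [mul_assoc] using this
  have hint2 : IntervalIntegrable (fun s => exp (γ * (s - τ)) * g s) volume τ c :=
    GP_intInt_mul hgloc (le_refl τ) hc.1 (hExpCont.continuousOn)
  have key : m - y τ ≤ ∫ s in τ..c, φ s := by
    rw [hm, ← hhτ]
    apply intervalIntegral.sub_le_integral_of_hasDeriv_right_of_le hc.1
      (hhcont.mono (Icc_subset_Icc le_rfl hc.2))
      (g' := fun s => (y' s + γ * y s) * exp (γ * (s - τ)))
    · intro x hx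
      have hx' : τ ≤ x := hx.1.le
      have he : HasDerivAt (fun s : ℝ => exp (γ * (s - τ))) (exp (γ * (x - τ)) * γ) x := by
        have h0 : HasDerivAt (fun s : ℝ => γ * (s - τ)) γ x := by
          simpa using ((hasDerivAt_id x).sub_const τ).const_mul γ
        exact h0.exp
      have := (hderiv x hx') |>.mul he
      have h2 : HasDerivAt h ((y' x + γ * y x) * exp (γ * (x - τ))) x := by
        exact this.congr_deriv (by ring)
      exact h2.hasDerivWithinAt
    · rw [← intervalIntegrable_iff_integrableOn_Icc_of_le hc.1]
      exact hint1.add hint2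
    · intro x hx
      have hx' : τ ≤ x := hx.1.le
      have hm1 := mul_le_mul_of_nonneg_right (hineq x hx') (exp_pos (γ * (x - τ))).le
      calc (y' x + γ * y x) * exp (γ * (x - τ))
          ≤ (f x * y x ^ ((1:ℝ)/2) + g x) * exp (γ * (x - τ)) := hm1
        _ = φ x := by rw [hφ]; ring
  -- pointwise bound for the f-term
  have hptwise : ∀ s ∈ Icc τ c,
      exp (γ * (s - τ)) * y s ^ ((1:ℝ)/2) * f s
        ≤ (m ^ ((1:ℝ)/2) * exp (γ/2 * (s - τ))) * f s := by
    intro s hs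
    have hsτ : τ ≤ s := hs.1
    have hys : y s ≤ m * exp (-(γ * (s - τ))) := by
      have h1 : h s ≤ m := hm_ge s ⟨hs.1, hs.2.trans hc.2⟩
      have h2 := mul_le_mul_of_nonneg_right h1 (exp_pos (-(γ * (s - τ)))).le
      have h3 : exp (γ * (s - τ)) * exp (-(γ * (s - τ))) = 1 := by
        rw [← exp_add]; simp
      calc y s = y s * (exp (γ * (s - τ)) * exp (-(γ * (s - τ)))) := by rw [h3]; ring
        _ = h s * exp (-(γ * (s - τ))) := by rw [hh]; ring
        _ ≤ m * exp (-(γ * (s - τ))) := h2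
    have hyr : y s ^ ((1:ℝ)/2) ≤ m ^ ((1:ℝ)/2) * exp (-(γ/2 * (s - τ))) := by
      have h4 : y s ^ ((1:ℝ)/2) ≤ (m * exp (-(γ * (s - τ)))) ^ ((1:ℝ)/2) :=
        Real.rpow_le_rpow (hy0 s hsτ) hys (by norm_num)
      rwa [Real.mul_rpow hmpos.le (exp_pos _).le, ← Real.exp_mul,
        show -(γ * (s - τ)) * ((1:ℝ)/2) = -(γ/2 * (s - τ)) by ring] at h4
    have h5 : exp (γ * (s - τ)) * exp (-(γ/2 * (s - τ))) = exp (γ/2 * (s - τ)) := by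
      rw [← exp_add]; ring_nf
    have h6 := mul_le_mul_of_nonneg_left hyr (exp_pos (γ * (s - τ))).le
    have h7 : exp (γ * (s - τ)) * y s ^ ((1:ℝ)/2)
        ≤ m ^ ((1:ℝ)/2) * exp (γ/2 * (s - τ)) := by
      calc exp (γ * (s - τ)) * y s ^ ((1:ℝ)/2)
          ≤ exp (γ * (s - τ)) * (m ^ ((1:ℝ)/2) * exp (-(γ/2 * (s - τ)))) := h6
        _ = m ^ ((1:ℝ)/2) * (exp (γ * (s - τ)) * exp (-(γ/2 * (s - τ)))) := by ring
        _ = m ^ ((1:ℝ)/2) * exp (γ/2 * (s - τ)) := by rw [h5]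
    exact mul_le_mul_of_nonneg_right h7 (hf s hsτ)
  -- bound the f-integral
  have hfint_bound : ∫ s in τ..c, exp (γ * (s - τ)) * y s ^ ((1:ℝ)/2) * f s
      ≤ m ^ ((1:ℝ)/2) * exp (γ/2 * (c - τ)) * ((1 - exp (-(γ/2)))⁻¹ * A₁) := by
    have step1 : ∫ s in τ..c, exp (γ * (s - τ)) * y s ^ ((1:ℝ)/2) * f s
        ≤ ∫ s in τ..c, (m ^ ((1:ℝ)/2) * exp (γ/2 * (s - τ))) * f s := by
      apply intervalIntegral.integral_mono_on hc.1 hint1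
        (GP_intInt_mul hfloc (le_refl τ) hc.1 (by fun_prop)) hptwise
    have step2 : ∫ s in τ..c, (m ^ ((1:ℝ)/2) * exp (γ/2 * (s - τ))) * f s
        = (m ^ ((1:ℝ)/2) * exp (γ/2 * (c - τ))) * ∫ s in τ..c, exp (-(γ/2) * (c - s)) * f s := by
      rw [← intervalIntegral.integral_const_mul]
      apply intervalIntegral.integral_congr
      intro x _
      simp only
      rw [show m ^ ((1:ℝ)/2) * exp (γ/2 * (c - τ)) * (exp (-(γ/2) * (c - x)) * f x)
            = m ^ ((1:ℝ)/2) * (exp (γ/2 * (c - τ)) * exp (-(γ/2) * (c - x))) * f x by ring,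
        ← exp_add]
      ring_nf
    have step3 : ∫ s in τ..c, exp (-(γ/2) * (c - s)) * f s ≤ (1 - exp (-(γ/2)))⁻¹ * A₁ :=
      GP_kernel (by linarith) hA₁.le hf hfloc hf1 hc.1
    have hnn : 0 ≤ m ^ ((1:ℝ)/2) * exp (γ/2 * (c - τ)) :=
      mul_nonneg (Real.rpow_nonneg hmpos.le _) (exp_pos _).le
    calc ∫ s in τ..c, exp (γ * (s - τ)) * y s ^ ((1:ℝ)/2) * f s
        ≤ (m ^ ((1:ℝ)/2) * exp (γ/2 * (c - τ))) * ∫ s in τ..c, exp (-(γ/2) * (c - s)) * f s := by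
          rw [← step2]; exact step1
      _ ≤ m ^ ((1:ℝ)/2) * exp (γ/2 * (c - τ)) * ((1 - exp (-(γ/2)))⁻¹ * A₁) := by
          exact mul_le_mul_of_nonneg_left step3 hnn
  -- bound the g-integral
  have hgint_bound : ∫ s in τ..c, exp (γ * (s - τ)) * g s
      ≤ exp (γ * (c - τ)) * ((1 - exp (-γ))⁻¹ * A₂) := by
    have step2 : ∫ s in τ..c, exp (γ * (s - τ)) * g s
        = exp (γ * (c - τ)) * ∫ s in τ..c, exp (-γ * (c - s)) * g s := by
      rw [← intervalIntegral.integral_const_mul]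
      apply intervalIntegral.integral_congr
      intro x _
      simp only
      rw [← mul_assoc, ← exp_add]
      ring_nf
    have step3 : ∫ s in τ..c, exp (-γ * (c - s)) * g s ≤ (1 - exp (-γ))⁻¹ * A₂ :=
      GP_kernel hγ hA₂.le hg hgloc hg1 hc.1
    rw [step2]
    exact mul_le_mul_of_nonneg_left step3 (exp_pos _).le
  -- split the integral
  have hsplit : ∫ s in τ..c, φ s = (∫ s in τ..c, exp (γ * (s - τ)) * y s ^ ((1:ℝ)/2) * f s)
      + ∫ s in τ..c, exp (γ * (s - τ)) * g s := intervalIntegral.integral_add hint1 hint2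
  -- assemble
  set Qv := ((1 - exp (-(γ/2)))⁻¹ * A₁)^2 + 2 * (1 - exp (-γ))⁻¹ * A₂ with hQv
  set κ := exp (γ/2 * (c - τ)) * ((1 - exp (-(γ/2)))⁻¹ * A₁) with hκ
  have hmain : m ≤ y τ + m ^ ((1:ℝ)/2) * κ + exp (γ * (c - τ)) * ((1 - exp (-γ))⁻¹ * A₂) := by
    have := key
    rw [hsplit] at this
    have h8 : m ^ ((1:ℝ)/2) * exp (γ/2 * (c - τ)) * ((1 - exp (-(γ/2)))⁻¹ * A₁)
        = m ^ ((1:ℝ)/2) * κ := by rw [hκ]; ring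
    linarith [hfint_bound, hgint_bound]
  have hsq : (m ^ ((1:ℝ)/2)) * (m ^ ((1:ℝ)/2)) = m := by
    rw [← Real.rpow_add hmpos]
    norm_num
  have hκsq : κ * κ = exp (γ * (c - τ)) * ((1 - exp (-(γ/2)))⁻¹ * A₁)^2 := by
    rw [hκ, show exp (γ/2 * (c - τ)) * ((1 - exp (-(γ/2)))⁻¹ * A₁) *
        (exp (γ/2 * (c - τ)) * ((1 - exp (-(γ/2)))⁻¹ * A₁))
      = (exp (γ/2 * (c - τ)) * exp (γ/2 * (c - τ))) * ((1 - exp (-(γ/2)))⁻¹ * A₁)^2 by ring,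
      ← exp_add]
    ring_nf
  have hamgm : m ^ ((1:ℝ)/2) * κ ≤ m / 2 + κ * κ / 2 := by
    nlinarith [sq_nonneg (m ^ ((1:ℝ)/2) - κ), hsq]
  have hm_bound : m ≤ 2 * y τ + exp (γ * (c - τ)) * Qv := by
    have hgoal_eq : exp (γ * (c - τ)) * Qv
        = exp (γ * (c - τ)) * ((1 - exp (-(γ/2)))⁻¹ * A₁)^2
          + 2 * (exp (γ * (c - τ)) * ((1 - exp (-γ))⁻¹ * A₂)) := by rw [hQv]; ring
    have h10 : m / 2 ≤ y τ + κ * κ / 2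
        + exp (γ * (c - τ)) * ((1 - exp (-γ))⁻¹ * A₂) := by linarith [hmain, hamgm]
    have h11 : m ≤ 2 * y τ + (exp (γ * (c - τ)) * ((1 - exp (-(γ/2)))⁻¹ * A₁) ^ 2
        + 2 * (exp (γ * (c - τ)) * ((1 - exp (-γ))⁻¹ * A₂))) := by linarith [h10, hκsq]
    rw [hgoal_eq]
    linarith [h11]
  -- conclude
  have hQv0 : 0 ≤ Qv := by
    rw [hQv]
    have h1 : (0:ℝ) < 1 - exp (-γ) := by
      have : exp (-γ) < 1 := exp_lt_one_iff.2 (by linarith)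
      linarith
    positivity
  have hexp_mono : exp (γ * (c - τ)) ≤ exp (γ * (t - τ)) :=
    exp_le_exp.2 (mul_le_mul_of_nonneg_left (sub_le_sub_right hc.2 τ) hγ.le)
  have hm_bound2 : m ≤ 2 * y τ + exp (γ * (t - τ)) * Qv := by
    have := mul_le_mul_of_nonneg_right hexp_mono hQv0
    linarith
  have hyt : y t * exp (γ * (t - τ)) ≤ m := hm_ge t (right_mem_Icc.2 ht)
  have hee : exp (γ * (t - τ)) * exp (-(γ * (t - τ))) = 1 := by rw [← exp_add]; simp
  have := mul_le_mul_of_nonneg_right hm_bound2 (exp_pos (-(γ * (t - τ)))).le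
  calc y t = y t * exp (γ * (t - τ)) * exp (-(γ * (t - τ))) := by rw [mul_assoc, hee, mul_one]
    _ ≤ m * exp (-(γ * (t - τ))) :=
        mul_le_mul_of_nonneg_right hyt (exp_pos _).le
    _ ≤ (2 * y τ + exp (γ * (t - τ)) * Qv) * exp (-(γ * (t - τ))) := this
    _ = 2 * y τ * exp (-(γ * (t - τ))) + (exp (γ * (t - τ)) * exp (-(γ * (t - τ)))) * Qv := by
        ring
    _ = 2 * y τ * exp (-(γ * (t - τ))) + Qv := by rw [hee, one_mul]

/-- scaling of the geometric constant. -/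
lemma GP_scale {σ lam : ℝ} (hσ : 0 < σ) (hl0 : 0 < lam) (hl1 : lam ≤ 1) :
    lam * (1 - exp (-(lam * σ)))⁻¹ ≤ (1 - exp (-σ))⁻¹ := by
  have hd1 : 0 < 1 - exp (-(lam * σ)) := by
    have : exp (-(lam * σ)) < 1 := exp_lt_one_iff.2 (by nlinarith)
    linarith
  have hd2 : 0 < 1 - exp (-σ) := by
    have : exp (-σ) < 1 := exp_lt_one_iff.2 (by linarith)
    linarith
  have hconv : exp (-(lam * σ)) ≤ (1 - lam) * 1 + lam * exp (-σ) := by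
    have h := convexOn_exp.2 (mem_univ (0:ℝ)) (mem_univ (-σ))
      (by linarith : (0:ℝ) ≤ 1 - lam) hl0.le (by ring)
    simpa [smul_eq_mul, mul_comm] using h
  have hkey : lam * (1 - exp (-σ)) ≤ 1 - exp (-(lam * σ)) := by nlinarith
  have hfin : lam / (1 - exp (-(lam * σ))) ≤ 1 / (1 - exp (-σ)) :=
    (div_le_div_iff₀ hd1 hd2).2 (by nlinarith)
  calc lam * (1 - exp (-(lam * σ)))⁻¹ = lam / (1 - exp (-(lam * σ))) := by
        rw [div_eq_mul_inv]
    _ ≤ 1 / (1 - exp (-σ)) := hfin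
    _ = (1 - exp (-σ))⁻¹ := one_div _

lemma GP_pow_add {a b p : ℝ} (ha : 0 ≤ a) (hb : 0 ≤ b) (hp : 1 ≤ p) :
    (a + b) ^ p ≤ 2 ^ (p - 1) * (a ^ p + b ^ p) := by
  have h := (convexOn_rpow hp).2 (mem_Ici.2 ha) (mem_Ici.2 hb)
    (by norm_num : (0:ℝ) ≤ 1/2) (by norm_num : (0:ℝ) ≤ 1/2) (by norm_num)
  simp only [smul_eq_mul] at h
  have h2 : ((a + b)/2) ^ p ≤ (a ^ p + b ^ p)/2 := by
    rw [show (a+b)/2 = 1/2*a + 1/2*b by ring]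
    calc (1/2*a + 1/2*b) ^ p ≤ 1/2 * a^p + 1/2 * b^p := h
      _ = (a^p + b^p)/2 := by ring
  have h3 : (a + b) ^ p = 2 ^ p * ((a+b)/2) ^ p := by
    rw [← Real.mul_rpow (by norm_num) (by positivity), mul_div_cancel₀]
    norm_num
  have h4 : (2:ℝ) ^ (p - 1) = 2 ^ p / 2 := by
    rw [Real.rpow_sub (by norm_num), Real.rpow_one]
  rw [h3, h4]
  have h5 : (0:ℝ) ≤ 2 ^ p := by positivity
  calc 2 ^ p * ((a+b)/2) ^ p ≤ 2 ^ p * ((a^p + b^p)/2) := by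
        exact mul_le_mul_of_nonneg_left h2 h5
    _ = 2 ^ p / 2 * (a ^ p + b ^ p) := by ring

lemma GP_locmul {τ c : ℝ} {F : ℝ → ℝ} (h : LocallyIntegrableOn F (Ici τ) volume) :
    LocallyIntegrableOn (fun s => c * F s) (Ici τ) volume := by
  intro x hx
  obtain ⟨U, hU, hint⟩ := h x hx
  exact ⟨U, hU, hint.const_mul c⟩

set_option maxHeartbeats 1600000 in
lemma GP_main (n : ℕ) : ∀ (τ γ : ℝ), 0 < γ → ∀ (y y' f g : ℝ → ℝ) (A₁ A₂ : ℝ),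
    0 < A₁ → 0 < A₂ →
    (∀ t ∈ Ici τ, 1 ≤ y t) →
    (∀ t ∈ Ici τ, 0 ≤ f t) → (∀ t ∈ Ici τ, 0 ≤ g t) →
    LocallyIntegrableOn f (Ici τ) volume →
    LocallyIntegrableOn g (Ici τ) volume →
    (∀ t ∈ Ici τ, HasDerivAt y (y' t) t) →
    (∀ t ∈ Ici τ, y' t + γ * y t ≤ f t * y t ^ (((n:ℝ) + 1)/((n:ℝ) + 2)) + g t) →
    (∀ r ∈ Ici τ, ∫ s in r..(r + 1), f s ≤ A₁) →
    (∀ r ∈ Ici τ, ∫ s in r..(r + 1), g s ≤ A₂) →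
    ∀ t ∈ Ici τ, y t ≤ (2:ℝ)^(n+1) * y τ * exp (-(γ * (t - τ)))
      + (2:ℝ) ^ ((n:ℝ)/2) *
        ((((1 - exp (-(γ/2)))⁻¹ * A₁)^2 + 2 * (1 - exp (-γ))⁻¹ * A₂) ^ (((n:ℝ) + 2)/2)) := by
  induction n with
  | zero =>
    intro τ γ hγ y y' f g A₁ A₂ hA₁ hA₂ hy1 hf hg hfloc hgloc hderiv hineq hf1 hg1 t ht
    have hineq' : ∀ t ∈ Ici τ, y' t + γ * y t ≤ f t * y t ^ ((1:ℝ)/2) + g t := by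
      intro s hs
      have h0 := hineq s hs
      have he : (((0:ℕ):ℝ) + 1)/(((0:ℕ):ℝ) + 2) = (1:ℝ)/2 := by norm_num
      rwa [he] at h0
    have := GP_base τ γ hγ y y' f g A₁ A₂ hA₁ hA₂ hy1 hf hg hfloc hgloc hderiv hineq' hf1 hg1 t ht
    have hQ : (0:ℝ) ≤ ((1 - exp (-(γ/2)))⁻¹ * A₁)^2 + 2 * (1 - exp (-γ))⁻¹ * A₂ := by
      have h1 : (0:ℝ) < 1 - exp (-γ) := by
        have : exp (-γ) < 1 := exp_lt_one_iff.2 (by linarith)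
        linarith
      positivity
    rw [show ((0:ℕ):ℝ)/2 = (0:ℝ) by norm_num, Real.rpow_zero,
      show (((0:ℕ):ℝ) + 2)/2 = (1:ℝ) by norm_num, Real.rpow_one]
    norm_num at this ⊢
    linarith
  | succ m ih =>
    intro τ γ hγ y y' f g A₁ A₂ hA₁ hA₂ hy1 hf hg hfloc hgloc hderiv hineq hf1 hg1 t ht
    have hm2 : (0:ℝ) < (m:ℝ) + 2 := by positivity
    have hm3 : (0:ℝ) < (m:ℝ) + 3 := by positivity
    set ω : ℝ := ((m:ℝ) + 2)/((m:ℝ) + 3) with hω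
    have hω0 : 0 < ω := by positivity
    have hω1 : ω ≤ 1 := by rw [hω, div_le_one hm3]; linarith
    have hωlt : ω < 1 := by rw [hω, div_lt_one hm3]; linarith
    set p : ℝ := ((m:ℝ) + 3)/((m:ℝ) + 2) with hp
    have hp1 : 1 ≤ p := by rw [hp, le_div_iff₀ hm2]; linarith
    have hωp : ω * p = 1 := by rw [hω, hp]; field_simp
    -- the exponent in hineq is ω
    have hexpω : (((m:ℕ) + 1 : ℕ) : ℝ) = (m:ℝ) + 1 := by push_cast; ring
    have hineqω : ∀ s ∈ Ici τ, y' s + γ * y s ≤ f s * y s ^ ω + g s := by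
      intro s hs
      have := hineq s hs
      have he : ((((m+1:ℕ)):ℝ) + 1)/((((m+1:ℕ)):ℝ) + 2) = ω := by
        rw [hω]; push_cast; ring_nf
      rwa [he] at this
    -- the new system
    set z : ℝ → ℝ := fun s => y s ^ ω with hz
    set z' : ℝ → ℝ := fun s => y' s * ω * y s ^ (ω - 1) with hz'
    have hypos : ∀ s ∈ Ici τ, (0:ℝ) < y s := fun s hs => lt_of_lt_of_le one_pos (hy1 s hs)
    have hz1 : ∀ s ∈ Ici τ, 1 ≤ z s := by
      intro s hs
      rw [hz]
      calc (1:ℝ) = 1 ^ ω := (Real.one_rpow ω).symm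
        _ ≤ y s ^ ω := Real.rpow_le_rpow zero_le_one (hy1 s hs) hω0.le
    have hzderiv : ∀ s ∈ Ici τ, HasDerivAt z (z' s) s := by
      intro s hs
      exact (hderiv s hs).rpow_const (Or.inl (hypos s hs).ne')
    have hzineq : ∀ s ∈ Ici τ, z' s + (ω * γ) * z s
        ≤ (ω * f s) * z s ^ (((m:ℝ) + 1)/((m:ℝ) + 2)) + (ω * g s) := by
      intro s hs
      have hys := hypos s hs
      have hys1 := hy1 s hs
      have h0 : y' s ≤ f s * y s ^ ω + g s - γ * y s := by linarith [hineqω s hs]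
      have hpnn : (0:ℝ) ≤ ω * y s ^ (ω - 1) := by positivity
      have h1 : y' s * (ω * y s ^ (ω - 1))
          ≤ (f s * y s ^ ω + g s - γ * y s) * (ω * y s ^ (ω - 1)) :=
        mul_le_mul_of_nonneg_right h0 hpnn
      have e1 : y s ^ ω * y s ^ (ω - 1) = y s ^ (2 * ω - 1) := by
        rw [← Real.rpow_add hys]; ring_nf
      have e2 : y s * y s ^ (ω - 1) = y s ^ ω := by
        nth_rewrite 1 [← Real.rpow_one (y s)]
        rw [← Real.rpow_add hys]; ring_nf
      have hq : ω * (((m:ℝ) + 1)/((m:ℝ) + 2)) = 2 * ω - 1 := by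
        rw [hω]; field_simp; ring
      have e3 : z s ^ (((m:ℝ) + 1)/((m:ℝ) + 2)) = y s ^ (2 * ω - 1) := by
        simp only [hz]
        rw [← Real.rpow_mul hys.le, hq]
      have hyω1 : y s ^ (ω - 1) ≤ 1 :=
        Real.rpow_le_one_of_one_le_of_nonpos hys1 (by linarith)
      have hgbd : g s * (ω * y s ^ (ω - 1)) ≤ ω * g s := by
        have hgs := hg s hs
        have hb : (0:ℝ) ≤ y s ^ (ω - 1) := Real.rpow_nonneg hys.le _
        have h2 : (g s * ω) * y s ^ (ω - 1) ≤ (g s * ω) * 1 :=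
          mul_le_mul_of_nonneg_left hyω1 (mul_nonneg hgs hω0.le)
        nlinarith [h2]
      have hrest : f s * y s ^ ω * (ω * y s ^ (ω - 1)) = (ω * f s) * y s ^ (2 * ω - 1) := by
        calc f s * y s ^ ω * (ω * y s ^ (ω - 1))
            = ω * f s * (y s ^ ω * y s ^ (ω - 1)) := by ring
          _ = (ω * f s) * y s ^ (2 * ω - 1) := by rw [e1]
      have hγterm : γ * y s * (ω * y s ^ (ω - 1)) = (ω * γ) * z s := by
        calc γ * y s * (ω * y s ^ (ω - 1)) = ω * γ * (y s * y s ^ (ω - 1)) := by ring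
          _ = (ω * γ) * z s := by rw [e2]
      have hz'eq : z' s = y' s * (ω * y s ^ (ω - 1)) := by simp only [hz']; ring
      rw [hz'eq, e3]
      calc y' s * (ω * y s ^ (ω - 1)) + ω * γ * z s
          ≤ (f s * y s ^ ω + g s - γ * y s) * (ω * y s ^ (ω - 1)) + ω * γ * z s := by
            linarith [h1]
        _ = f s * y s ^ ω * (ω * y s ^ (ω - 1)) + g s * (ω * y s ^ (ω - 1))
            - γ * y s * (ω * y s ^ (ω - 1)) + ω * γ * z s := by ring
        _ = (ω * f s) * y s ^ (2 * ω - 1) + g s * (ω * y s ^ (ω - 1)) := by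
            rw [hrest, hγterm]; ring
        _ ≤ (ω * f s) * y s ^ (2 * ω - 1) + ω * g s := by linarith [hgbd]
    -- apply the induction hypothesis to the transformed system
    have hQ'pos : (0:ℝ) < 1 - exp (-(ω * γ / 2)) := by
      have : exp (-(ω * γ / 2)) < 1 := exp_lt_one_iff.2 (by nlinarith)
      linarith
    have hQ''pos : (0:ℝ) < 1 - exp (-(ω * γ)) := by
      have : exp (-(ω * γ)) < 1 := exp_lt_one_iff.2 (by nlinarith)
      linarith
    have hQγpos1 : (0:ℝ) < 1 - exp (-(γ / 2)) := by
      have : exp (-(γ / 2)) < 1 := exp_lt_one_iff.2 (by nlinarith)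
      linarith
    have hQγpos2 : (0:ℝ) < 1 - exp (-γ) := by
      have : exp (-γ) < 1 := exp_lt_one_iff.2 (by nlinarith)
      linarith
    have hzbound := ih τ (ω * γ) (by positivity) z z' (fun s => ω * f s) (fun s => ω * g s)
      (ω * A₁) (ω * A₂) (by positivity) (by positivity) hz1
      (fun s hs => mul_nonneg hω0.le (hf s hs)) (fun s hs => mul_nonneg hω0.le (hg s hs))
      (GP_locmul hfloc) (GP_locmul hgloc) hzderiv hzineq
      (fun r hr => by
        rw [intervalIntegral.integral_const_mul]
        exact mul_le_mul_of_nonneg_left (hf1 r hr) hω0.le)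
      (fun r hr => by
        rw [intervalIntegral.integral_const_mul]
        exact mul_le_mul_of_nonneg_left (hg1 r hr) hω0.le)
      t ht
    -- scaling of the constants
    set Qγ : ℝ := ((1 - exp (-(γ/2)))⁻¹ * A₁)^2 + 2 * (1 - exp (-γ))⁻¹ * A₂ with hQγ
    have hQγ0 : 0 ≤ Qγ := by rw [hQγ]; positivity
    have hscale1 : (1 - exp (-(ω * γ / 2)))⁻¹ * (ω * A₁) ≤ (1 - exp (-(γ/2)))⁻¹ * A₁ := by
      have h := GP_scale (show (0:ℝ) < γ/2 by linarith) hω0 hω1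
      have he : -(ω * (γ/2)) = -(ω * γ / 2) := by ring
      rw [he] at h
      calc (1 - exp (-(ω * γ / 2)))⁻¹ * (ω * A₁)
          = (ω * (1 - exp (-(ω * γ / 2)))⁻¹) * A₁ := by ring
        _ ≤ (1 - exp (-(γ/2)))⁻¹ * A₁ := mul_le_mul_of_nonneg_right h hA₁.le
    have hscale2 : (1 - exp (-(ω * γ)))⁻¹ * (ω * A₂) ≤ (1 - exp (-γ))⁻¹ * A₂ := by
      have h := GP_scale hγ hω0 hω1
      calc (1 - exp (-(ω * γ)))⁻¹ * (ω * A₂)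
          = (ω * (1 - exp (-(ω * γ)))⁻¹) * A₂ := by ring
        _ ≤ (1 - exp (-γ))⁻¹ * A₂ := mul_le_mul_of_nonneg_right h hA₂.le
    have hQ'le : ((1 - exp (-(ω * γ / 2)))⁻¹ * (ω * A₁))^2 + 2 * (1 - exp (-(ω * γ)))⁻¹ * (ω * A₂)
        ≤ Qγ := by
      rw [hQγ]
      have h1 : ((1 - exp (-(ω * γ / 2)))⁻¹ * (ω * A₁))^2 ≤ ((1 - exp (-(γ/2)))⁻¹ * A₁)^2 := by
        apply pow_le_pow_left₀ (by positivity) hscale1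
      nlinarith [hscale2]
    have hQ'0 : (0:ℝ) ≤ ((1 - exp (-(ω * γ / 2)))⁻¹ * (ω * A₁))^2
        + 2 * (1 - exp (-(ω * γ)))⁻¹ * (ω * A₂) := by positivity
    -- z-bound with the scaled constant replaced
    have hzb2 : z t ≤ (2:ℝ)^(m+1) * z τ * exp (-(ω * γ * (t - τ)))
        + (2:ℝ) ^ ((m:ℝ)/2) * (Qγ ^ (((m:ℝ) + 2)/2)) := by
      have hmono : (((1 - exp (-(ω * γ / 2)))⁻¹ * (ω * A₁))^2
            + 2 * (1 - exp (-(ω * γ)))⁻¹ * (ω * A₂)) ^ (((m:ℝ) + 2)/2)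
          ≤ Qγ ^ (((m:ℝ) + 2)/2) :=
        Real.rpow_le_rpow hQ'0 hQ'le (by positivity)
      have h2 : (0:ℝ) ≤ (2:ℝ) ^ ((m:ℝ)/2) := by positivity
      have := hzbound
      have he2 : -(ω * γ / 2) = -(ω * γ / 2) := rfl
      nlinarith [mul_le_mul_of_nonneg_left hmono h2]
    -- raise to the power p
    have hzt0 : (0:ℝ) ≤ z t := le_trans zero_le_one (hz1 t ht)
    have hzτ0 : (0:ℝ) ≤ z τ := le_trans zero_le_one (hz1 τ (mem_Ici.2 le_rfl))
    have hyt : y t = z t ^ p := by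
      simp only [hz]
      rw [← Real.rpow_mul (hypos t ht).le, hωp, Real.rpow_one]
    have hyτ : z τ ^ p = y τ := by
      simp only [hz]
      rw [← Real.rpow_mul (hypos τ (mem_Ici.2 le_rfl)).le, hωp, Real.rpow_one]
    set a : ℝ := (2:ℝ)^(m+1) * z τ * exp (-(ω * γ * (t - τ))) with ha
    set b : ℝ := (2:ℝ) ^ ((m:ℝ)/2) * (Qγ ^ (((m:ℝ) + 2)/2)) with hb
    have ha0 : 0 ≤ a := by rw [ha]; positivity
    have hb0 : 0 ≤ b := by rw [hb]; positivity
    have hstep : y t ≤ 2 ^ (p - 1) * (a ^ p + b ^ p) := by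
      rw [hyt]
      calc z t ^ p ≤ (a + b) ^ p := Real.rpow_le_rpow hzt0 hzb2 (by linarith)
        _ ≤ 2 ^ (p - 1) * (a ^ p + b ^ p) := GP_pow_add ha0 hb0 hp1
    -- compute the two terms
    have hap : 2 ^ (p - 1) * a ^ p = (2:ℝ)^(m+1+1) * y τ * exp (-(γ * (t - τ))) := by
      rw [ha, Real.mul_rpow (by positivity) (exp_pos _).le,
        Real.mul_rpow (by positivity) hzτ0, hyτ]
      rw [← Real.rpow_natCast (2:ℝ) (m+1), ← Real.rpow_mul (by norm_num : (0:ℝ) ≤ 2),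
        ← Real.exp_mul]
      rw [show -(ω * γ * (t - τ)) * p = -(γ * (t - τ)) * (ω * p) by ring, hωp, mul_one]
      rw [show (2:ℝ) ^ (p-1) * ((2:ℝ) ^ ((((m+1:ℕ)):ℝ) * p) * y τ * exp (-(γ * (t - τ))))
          = ((2:ℝ) ^ (p-1) * (2:ℝ) ^ ((((m+1:ℕ)):ℝ) * p)) * y τ * exp (-(γ * (t - τ))) by ring,
        ← Real.rpow_add (by norm_num : (0:ℝ) < 2)]
      have hexp2 : p - 1 + (((m+1:ℕ)):ℝ) * p = ((m:ℝ) + 2) := by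
        push_cast
        rw [hp]
        field_simp
        ring
      rw [hexp2, show ((m:ℝ) + 2) = (((m+1+1:ℕ)):ℝ) by push_cast; ring,
        Real.rpow_natCast]
    have hbp : 2 ^ (p - 1) * b ^ p
        = (2:ℝ) ^ ((((m+1:ℕ)):ℝ)/2) * (Qγ ^ (((((m+1:ℕ)):ℝ) + 2)/2)) := by
      rw [hb, Real.mul_rpow (by positivity) (by positivity)]
      rw [← Real.rpow_mul (by norm_num : (0:ℝ) ≤ 2), ← Real.rpow_mul hQγ0]
      rw [show (2:ℝ) ^ (p-1) * ((2:ℝ) ^ ((m:ℝ)/2 * p) * Qγ ^ (((m:ℝ) + 2)/2 * p))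
          = ((2:ℝ) ^ (p-1) * (2:ℝ) ^ ((m:ℝ)/2 * p)) * Qγ ^ (((m:ℝ) + 2)/2 * p) by ring,
        ← Real.rpow_add (by norm_num : (0:ℝ) < 2)]
      have he1 : p - 1 + (m:ℝ)/2 * p = (((m+1:ℕ)):ℝ)/2 := by
        push_cast
        rw [hp]
        field_simp
        ring
      have he2 : ((m:ℝ) + 2)/2 * p = ((((m+1:ℕ)):ℝ) + 2)/2 := by
        push_cast
        rw [hp]
        field_simp
        ring
      rw [he1, he2]
    -- conclude
    rw [hQγ] at hbp
    calc y t ≤ 2 ^ (p - 1) * (a ^ p + b ^ p) := hstep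
      _ = 2 ^ (p - 1) * a ^ p + 2 ^ (p - 1) * b ^ p := by ring
      _ = (2:ℝ)^(m+1+1) * y τ * exp (-(γ * (t - τ)))
          + (2:ℝ) ^ ((((m+1:ℕ)):ℝ)/2) *
            ((((1 - exp (-(γ/2)))⁻¹ * A₁)^2 + 2 * (1 - exp (-γ))⁻¹ * A₂)
              ^ (((((m+1:ℕ)):ℝ) + 2)/2)) := by rw [hap, hbp]

/-- elementary : `2/(1-u²) ≤ u⁻¹/(1-u)` for `0 < u < 1`. -/
lemma GP_half {u : ℝ} (h0 : 0 < u) (h1 : u < 1) :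
    2 * (1 - u^2)⁻¹ ≤ u⁻¹ / (1 - u) := by
  have hu2 : 0 < 1 - u^2 := by nlinarith
  have hu1 : 0 < 1 - u := by linarith
  calc 2 * (1 - u^2)⁻¹ = 2 / (1 - u^2) := by rw [div_eq_mul_inv]
    _ ≤ 1 / (u * (1 - u)) := by
        rw [div_le_div_iff₀ hu2 (by positivity)]
        nlinarith
    _ = u⁻¹ / (1 - u) := by
        rw [one_div, mul_inv, div_eq_mul_inv]

set_option maxHeartbeats 3000000 in
theorem gronwall_power (τ γ : ℝ) (hγ : 0 < γ) (n : ℕ) (y y' f g : ℝ → ℝ) (A₁ A₂ : ℝ)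
    (hA₁ : 0 < A₁) (hA₂ : 0 < A₂)
    (hy : ∀ t ∈ Ici τ, 0 ≤ y t)
    (hy1 : ∀ t ∈ Ici τ, 1 ≤ y t)
    (hf : ∀ t ∈ Ici τ, 0 ≤ f t) (hg : ∀ t ∈ Ici τ, 0 ≤ g t)
    (hfloc : LocallyIntegrableOn f (Ici τ))
    (hgloc : LocallyIntegrableOn g (Ici τ))
    (hderiv : ∀ t ∈ Ici τ, HasDerivAt y (y' t) t)
    (hineq : ∀ t ∈ Ici τ,
      y' t + γ * y t ≤ f t * y t ^ (((n : ℝ) + 1) / ((n : ℝ) + 2)) + g t)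
    (hf1 : ∀ r ∈ Ici τ, ∫ s in r..(r + 1), f s ≤ A₁)
    (hg1 : ∀ r ∈ Ici τ, ∫ s in r..(r + 1), g s ≤ A₂) :
    ∀ t ∈ Ici τ,
      y t ≤ 4 * ((4 : ℝ) ^ (((n : ℝ) + 2) * ∑ j ∈ Finset.Icc 2 (n + 1), (1 : ℝ) / (j : ℝ))
          * (2 : ℝ) ^ (((n : ℝ) + 2) / 2) * y τ
          * exp (-(((n : ℝ) + 2) / (2 : ℝ) ^ (n + 1)) * γ * (t - τ))
        + (((exp ((γ / 2) / 2) / (1 - exp (-((γ / 2) / 2)))) * A₁) ^ 2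
            + (2 * exp (γ / 2) / (1 - exp (-(γ / 2)))) * A₂) ^ (((n : ℝ) + 2) / 2)) := by
  intro t ht
  have htτ : τ ≤ t := ht
  have hmain := GP_main n τ γ hγ y y' f g A₁ A₂ hA₁ hA₂ hy1 hf hg hfloc hgloc hderiv hineq
    hf1 hg1 t ht
  have hq4 : 0 < 1 - exp (-((γ/2)/2)) := by
    have : exp (-((γ/2)/2)) < 1 := exp_lt_one_iff.2 (by linarith)
    linarith
  have hq2 : 0 < 1 - exp (-(γ/2)) := by
    have : exp (-(γ/2)) < 1 := exp_lt_one_iff.2 (by linarith)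
    linarith
  have hq1 : 0 < 1 - exp (-γ) := by
    have : exp (-γ) < 1 := exp_lt_one_iff.2 (by linarith)
    linarith
  set β : ℝ := ((n:ℝ) + 2)/2 with hβ
  have hn0 : (0:ℝ) ≤ (n:ℝ) := Nat.cast_nonneg n
  have hβ1 : 1 ≤ β := by rw [hβ]; linarith
  set Qe : ℝ := ((1 - exp (-(γ/2)))⁻¹ * A₁)^2 + 2 * (1 - exp (-γ))⁻¹ * A₂ with hQe
  set Q : ℝ := ((exp ((γ / 2) / 2) / (1 - exp (-((γ / 2) / 2)))) * A₁) ^ 2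
      + (2 * exp (γ / 2) / (1 - exp (-(γ / 2)))) * A₂ with hQ
  have hQ0 : (0:ℝ) ≤ Q := by rw [hQ]; positivity
  have hQe0 : (0:ℝ) ≤ Qe := by rw [hQe]; positivity
  -- Claim 2 : Qe ≤ Q/2
  have hQeQ : Qe ≤ Q/2 := by
    -- first component
    have hu0 : 0 < exp (-((γ/2)/2)) := exp_pos _
    have hu1 : exp (-((γ/2)/2)) < 1 := exp_lt_one_iff.2 (by linarith)
    have hsq : exp (-(γ/2)) = exp (-((γ/2)/2))^2 := by
      rw [sq, ← exp_add]
      congr 1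
      ring
    have hinv : exp ((γ/2)/2) = (exp (-((γ/2)/2)))⁻¹ := by
      rw [exp_neg, inv_inv]
    have h1 : 2 * (1 - exp (-(γ/2)))⁻¹ ≤ exp ((γ/2)/2) / (1 - exp (-((γ/2)/2))) := by
      rw [hsq, hinv]
      exact GP_half hu0 hu1
    have h1' : (1 - exp (-(γ/2)))⁻¹ * A₁ ≤ (exp ((γ/2)/2) / (1 - exp (-((γ/2)/2))) * A₁) / 2 := by
      have hm := mul_le_mul_of_nonneg_right h1 hA₁.le
      linarith
    have h1sq : ((1 - exp (-(γ/2)))⁻¹ * A₁)^2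
        ≤ (exp ((γ/2)/2) / (1 - exp (-((γ/2)/2))) * A₁)^2 / 2 := by
      have hnn : (0:ℝ) ≤ (1 - exp (-(γ/2)))⁻¹ * A₁ := by positivity
      have := pow_le_pow_left₀ hnn h1' 2
      have h4 : ((exp ((γ/2)/2) / (1 - exp (-((γ/2)/2))) * A₁) / 2)^2
          = (exp ((γ/2)/2) / (1 - exp (-((γ/2)/2))) * A₁)^2 / 4 := by ring
      nlinarith [sq_nonneg (exp ((γ/2)/2) / (1 - exp (-((γ/2)/2))) * A₁)]
    -- second component
    have hv0 : 0 < exp (-(γ/2)) := exp_pos _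
    have hv1 : exp (-(γ/2)) < 1 := exp_lt_one_iff.2 (by linarith)
    have hsq2 : exp (-γ) = exp (-(γ/2))^2 := by
      rw [sq, ← exp_add]
      congr 1
      ring
    have hinv2 : exp (γ/2) = (exp (-(γ/2)))⁻¹ := by rw [exp_neg, inv_inv]
    have h2 : 2 * (1 - exp (-γ))⁻¹ ≤ exp (γ/2) / (1 - exp (-(γ/2))) := by
      rw [hsq2, hinv2]
      exact GP_half hv0 hv1
    have h2' : 2 * (1 - exp (-γ))⁻¹ * A₂ ≤ (2 * exp (γ/2) / (1 - exp (-(γ/2))) * A₂) / 2 := by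
      have : (2 * exp (γ/2) / (1 - exp (-(γ/2))) * A₂) / 2
          = (exp (γ/2) / (1 - exp (-(γ/2)))) * A₂ := by ring
      rw [this]
      exact mul_le_mul_of_nonneg_right h2 hA₂.le
    rw [hQe, hQ]
    linarith [h1sq, h2']
  -- Claim 2 assembled
  have hclaim2 : (2:ℝ) ^ ((n:ℝ)/2) * (Qe ^ β) ≤ 4 * Q ^ β := by
    have hQeβ : Qe ^ β ≤ (Q/2) ^ β := Real.rpow_le_rpow hQe0 hQeQ (by linarith)
    have hdiv : (Q/2) ^ β = Q ^ β / (2:ℝ) ^ β := Real.div_rpow hQ0 (by norm_num) β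
    have hQβ0 : (0:ℝ) ≤ Q ^ β := Real.rpow_nonneg hQ0 β
    have h2β : (0:ℝ) < (2:ℝ) ^ β := Real.rpow_pos_of_pos (by norm_num) β
    have h2n : (0:ℝ) < (2:ℝ) ^ ((n:ℝ)/2) := Real.rpow_pos_of_pos (by norm_num) _
    have hkey : (2:ℝ) ^ ((n:ℝ)/2) / (2:ℝ) ^ β = 1/2 := by
      rw [← Real.rpow_sub (by norm_num : (0:ℝ) < 2)]
      rw [show (n:ℝ)/2 - β = -1 by rw [hβ]; ring]
      rw [Real.rpow_neg_one]
      norm_num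
    calc (2:ℝ) ^ ((n:ℝ)/2) * Qe ^ β ≤ (2:ℝ) ^ ((n:ℝ)/2) * (Q ^ β / (2:ℝ) ^ β) := by
          rw [← hdiv]; exact mul_le_mul_of_nonneg_left hQeβ h2n.le
      _ = ((2:ℝ) ^ ((n:ℝ)/2) / (2:ℝ) ^ β) * Q ^ β := by ring
      _ = (1/2) * Q ^ β := by rw [hkey]
      _ ≤ 4 * Q ^ β := by linarith
  -- Claim 1
  set S : ℝ := ∑ j ∈ Finset.Icc 2 (n + 1), (1 : ℝ) / (j : ℝ) with hS
  have hS0 : 0 ≤ S := Finset.sum_nonneg fun j _ => by positivity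
  set α : ℝ := ((n:ℝ) + 2) * S with hα
  have hα0 : 0 ≤ α := by rw [hα]; positivity
  have hθle : ((n:ℝ) + 2) / (2:ℝ) ^ (n + 1) ≤ 1 := by
    rw [div_le_one (by positivity)]
    have hnat : (n + 2 : ℕ) ≤ 2 ^ (n + 1) := Nat.lt_two_pow_self (n := n+1)
    exact_mod_cast hnat
  have hexp : exp (-(γ * (t - τ))) ≤ exp (-(((n:ℝ) + 2) / (2:ℝ) ^ (n + 1)) * γ * (t - τ)) := by
    apply exp_le_exp.2
    have hΔ : 0 ≤ t - τ := sub_nonneg.2 htτ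
    nlinarith [mul_nonneg (mul_nonneg (sub_nonneg.2 hθle) hγ.le) hΔ]
  have hcoef : (2:ℝ)^(n+1) ≤ 4 * (4:ℝ) ^ α * (2:ℝ) ^ β := by
    have h4α : (4:ℝ) ^ α = (2:ℝ) ^ (2 * α) := by
      rw [show (4:ℝ) = (2:ℝ) ^ (2:ℝ) by
          rw [show (2:ℝ) = ((2:ℕ):ℝ) by norm_num, Real.rpow_natCast]; norm_num,
        ← Real.rpow_mul (by norm_num : (0:ℝ) ≤ 2)]
    have h4 : (4:ℝ) = (2:ℝ) ^ (2:ℝ) := by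
      rw [show (2:ℝ) = ((2:ℕ):ℝ) by norm_num, Real.rpow_natCast]; norm_num
    have hsum : 4 * (4:ℝ) ^ α * (2:ℝ) ^ β = (2:ℝ) ^ (2 + 2 * α + β) := by
      rw [h4α]
      nth_rewrite 1 [h4]
      rw [Real.rpow_add (by norm_num : (0:ℝ) < 2), Real.rpow_add (by norm_num : (0:ℝ) < 2)]
      try ring
    have hnp : (2:ℝ)^(n+1) = (2:ℝ) ^ (((n:ℝ)) + 1) := by
      rw [show ((n:ℝ)) + 1 = (((n+1:ℕ)):ℝ) by push_cast; ring, Real.rpow_natCast]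
    rw [hsum, hnp]
    apply Real.rpow_le_rpow_of_exponent_le (by norm_num)
    -- (n:ℝ) + 1 ≤ 2 + 2α + β
    rcases n with _ | m
    · have : S = 0 := by
        rw [hS]
        norm_num
      rw [hα, this]
      norm_num [hβ]
    · -- n = m + 1 : S ≥ 1/2
      have hmem : 2 ∈ Finset.Icc 2 (m + 1 + 1) := by
        rw [Finset.mem_Icc]
        omega
      have hhalf : (1:ℝ)/2 ≤ S := by
        rw [hS]
        have := Finset.single_le_sum (f := fun j : ℕ => (1:ℝ)/(j:ℝ))
          (fun j _ => by positivity) hmem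
        norm_num at this ⊢
        exact this
      have h2α : ((m:ℝ) + 1 + 2) ≤ 2 * α := by
        rw [hα]
        push_cast
        nlinarith [hhalf]
      rw [hβ]
      push_cast at h2α ⊢
      linarith
  -- assemble claim 1
  have hyτ0 : 0 ≤ y τ := hy τ (mem_Ici.2 le_rfl)
  have hclaim1 : (2:ℝ)^(n+1) * y τ * exp (-(γ * (t - τ)))
      ≤ (4 * (4:ℝ) ^ α * (2:ℝ) ^ β) * y τ
        * exp (-(((n:ℝ) + 2) / (2:ℝ) ^ (n + 1)) * γ * (t - τ)) := by
    have h1 : (2:ℝ)^(n+1) * y τ ≤ (4 * (4:ℝ) ^ α * (2:ℝ) ^ β) * y τ :=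
      mul_le_mul_of_nonneg_right hcoef hyτ0
    apply mul_le_mul h1 hexp (exp_pos _).le (by positivity)
  -- finish
  have htarget : 4 * ((4 : ℝ) ^ α * (2:ℝ) ^ β * y τ
        * exp (-(((n : ℝ) + 2) / (2 : ℝ) ^ (n + 1)) * γ * (t - τ)) + Q ^ β)
      = (4 * (4:ℝ) ^ α * (2:ℝ) ^ β) * y τ
          * exp (-(((n:ℝ) + 2) / (2:ℝ) ^ (n + 1)) * γ * (t - τ)) + 4 * Q ^ β := by ring
  rw [hQ, hβ, hα, hS] at htarget
  rw [htarget]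
  rw [hQe, hβ] at hclaim2
  rw [hα, hS, hβ] at hclaim1
  linarith [hmain, hclaim1, hclaim2]
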